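/- For a bounded continuous function σ : ℂ → ℝ define the conformal distance d_σ(x,y) = inf over all continuously differentiable paths α : [0,1] → ℂ with α(0) = x and α(1) = y of ∫₀¹ exp(σ(α(t))/2) |α'(t)| dt. Let σ, τ : ℂ → ℝ be bounded continuous functions and let x ∈ ℂ. Then lim_{y → x, y ≠ x} d_{τ+σ}(x,y) / d_τ(x,y) = exp(σ(x)/2). -/

import Mathlib

open Real Filter Topology

/-- The Riemannian distance of the conformal metric `e^{σ(z)}|dz|²` on the plane:
the infimum of `∫₀¹ e^{σ(α(t))/2} |α'(t)| dt` over `C¹` paths from `x` to `y`. -/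
noncomputable def confDist (σ : ℂ → ℝ) (x y : ℂ) : ℝ :=
  sInf { L : ℝ | ∃ α : ℝ → ℂ, ContDiff ℝ 1 α ∧ α 0 = x ∧ α 1 = y ∧
    L = ∫ t in (0 : ℝ)..1, Real.exp (σ (α t) / 2) * ‖deriv α t‖ }

lemma straight_mem (σ : ℂ → ℝ) (x y : ℂ) :
    (∫ t in (0:ℝ)..1, Real.exp (σ (x + t • (y - x)) / 2) * ‖y - x‖) ∈
      { L : ℝ | ∃ α : ℝ → ℂ, ContDiff ℝ 1 α ∧ α 0 = x ∧ α 1 = y ∧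
        L = ∫ t in (0 : ℝ)..1, Real.exp (σ (α t) / 2) * ‖deriv α t‖ } := by
  refine ⟨fun t => x + t • (y - x), ?_, by simp, by simp, ?_⟩
  · exact contDiff_const.add ((contDiff_id.smul contDiff_const))
  · have hd : ∀ t : ℝ, deriv (fun t : ℝ => x + t • (y - x)) t = y - x := by
      intro t
      rw [deriv_const_add]
      have : deriv (fun t : ℝ => t • (y - x)) t = (1:ℝ) • (y - x) := by
        have h := deriv_smul_const (c := fun t : ℝ => t) (x := t) differentiable_id.differentiableAt (y - x)
        simpa using h
      simpa using this
    simp_rw [hd]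

lemma confDist_bddBelow (σ : ℂ → ℝ) (x y : ℂ) :
    BddBelow { L : ℝ | ∃ α : ℝ → ℂ, ContDiff ℝ 1 α ∧ α 0 = x ∧ α 1 = y ∧
        L = ∫ t in (0 : ℝ)..1, Real.exp (σ (α t) / 2) * ‖deriv α t‖ } := by
  refine ⟨0, ?_⟩
  rintro L ⟨α, hα, h0, h1, rfl⟩
  apply intervalIntegral.integral_nonneg (by norm_num)
  intro t _
  positivity

lemma confDist_upper (σ : ℂ → ℝ) (hσc : Continuous σ) (x y : ℂ) {C : ℝ}
    (hC : ∀ t ∈ Set.Icc (0:ℝ) 1, σ (x + t • (y - x)) ≤ C) :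
    confDist σ x y ≤ Real.exp (C/2) * dist y x := by
  refine le_trans (csInf_le (confDist_bddBelow σ x y) (straight_mem σ x y)) ?_
  have habs : ‖y - x‖ = dist y x := by
    rw [Complex.dist_eq]
  calc (∫ t in (0:ℝ)..1, Real.exp (σ (x + t • (y - x)) / 2) * ‖y - x‖)
      ≤ ∫ t in (0:ℝ)..1, Real.exp (C / 2) * ‖y - x‖ := by
        apply intervalIntegral.integral_mono_on (by norm_num)
        · apply Continuous.intervalIntegrable
          continuity
        · exact intervalIntegrable_const
        · intro t ht
          have h2 := hC t ht
          have : Real.exp (σ (x + t • (y - x)) / 2) ≤ Real.exp (C / 2) :=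
            Real.exp_le_exp.2 (by linarith)
          exact mul_le_mul_of_nonneg_right this (norm_nonneg _)
    _ = Real.exp (C/2) * dist y x := by simp [habs]

lemma confDist_lower (σ : ℂ → ℝ) (hσc : Continuous σ) (x y : ℂ) {r c M : ℝ}
    (hM : ∀ z, -M ≤ σ z) (hc : ∀ z ∈ Metric.closedBall x r, c ≤ σ z) :
    min (Real.exp (c/2) * dist y x) (Real.exp (-M/2) * r) ≤ confDist σ x y := by
  apply le_csInf ⟨_, straight_mem σ x y⟩
  rintro L ⟨α, hα, h0, h1, rfl⟩
  have hd : Continuous (deriv α) := (hα.continuous_deriv le_rfl)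
  have hf : Continuous (fun t => Real.exp (σ (α t) / 2) * ‖deriv α t‖) :=
    (Real.continuous_exp.comp ((hσc.comp hα.continuous).div_const 2)).mul
      (continuous_norm.comp hd)
  have key : ∀ s ∈ Set.Icc (0:ℝ) 1, ∀ b : ℝ, (∀ t ∈ Set.Icc (0:ℝ) 1, b ≤ σ (α t)) →
      Real.exp (b/2) * dist (α s) (α 0) ≤
        ∫ t in (0:ℝ)..1, Real.exp (σ (α t) / 2) * ‖deriv α t‖ := by
    intro s hs b hb
    have h1' : (∫ t in (0:ℝ)..s, Real.exp (σ (α t) / 2) * ‖deriv α t‖) ≤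
        ∫ t in (0:ℝ)..1, Real.exp (σ (α t) / 2) * ‖deriv α t‖ := by
      apply intervalIntegral.integral_mono_interval le_rfl hs.1 hs.2
      · filter_upwards with t
        positivity
      · exact hf.intervalIntegrable _ _
    have h2' : Real.exp (b/2) * ∫ t in (0:ℝ)..s, ‖deriv α t‖ ≤
        ∫ t in (0:ℝ)..s, Real.exp (σ (α t) / 2) * ‖deriv α t‖ := by
      rw [← intervalIntegral.integral_const_mul]
      apply intervalIntegral.integral_mono_on hs.1
      · exact (continuous_const.mul (continuous_norm.comp hd)).intervalIntegrable _ _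
      · exact hf.intervalIntegrable _ _
      · intro t ht
        have : b ≤ σ (α t) := hb t ⟨ht.1, le_trans ht.2 hs.2⟩
        exact mul_le_mul_of_nonneg_right (Real.exp_le_exp.2 (by linarith)) (norm_nonneg _)
    have h3' : dist (α s) (α 0) ≤ ∫ t in (0:ℝ)..s, ‖deriv α t‖ := by
      have hfd : ∀ t ∈ Set.uIcc (0:ℝ) s, DifferentiableAt ℝ α t :=
        fun t _ => (hα.differentiable one_ne_zero).differentiableAt
      have hfi : IntervalIntegrable (deriv α) MeasureTheory.volume 0 s :=
        hd.intervalIntegrable _ _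
      have hftc : (∫ t in (0:ℝ)..s, deriv α t) = α s - α 0 :=
        intervalIntegral.integral_deriv_eq_sub hfd hfi
      have hn : dist (α s) (α 0) = ‖∫ t in (0:ℝ)..s, deriv α t‖ := by
        rw [hftc, dist_eq_norm]
      rw [hn]
      have := intervalIntegral.norm_integral_le_integral_norm (f := deriv α)
        (μ := MeasureTheory.volume) (a := (0:ℝ)) (b := s) hs.1
      simpa using this
    calc Real.exp (b/2) * dist (α s) (α 0)
        ≤ Real.exp (b/2) * ∫ t in (0:ℝ)..s, ‖deriv α t‖ := by
          exact mul_le_mul_of_nonneg_left h3' (Real.exp_nonneg _)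
      _ ≤ _ := le_trans h2' h1'
  by_cases hA : ∀ t ∈ Set.Icc (0:ℝ) 1, α t ∈ Metric.closedBall x r
  · refine le_trans (min_le_left _ _) ?_
    have := key 1 (by norm_num) c (fun t ht => hc _ (hA t ht))
    rwa [h1, h0] at this
  · push_neg at hA
    obtain ⟨t₀, ht₀, hout⟩ := hA
    refine le_trans (min_le_right _ _) ?_
    have hkey := key t₀ ht₀ (-M) (fun t _ => hM _)
    refine le_trans ?_ hkey
    have hrd : r ≤ dist (α t₀) (α 0) := by
      rw [h0]
      exact le_of_lt (by simpa [Metric.mem_closedBall, not_le] using hout)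
    exact mul_le_mul_of_nonneg_left hrd (Real.exp_nonneg _)

/-- Comparison of conformally equivalent distances: if `γ' = e^σ γ` (with `γ = e^τ |dz|²`),
then `d_{γ'}(x,y)/d_γ(x,y) → e^{σ(x)/2}` as `y → x`. -/
theorem confDist_ratio_limit
    (σ τ : ℂ → ℝ) (hσc : Continuous σ) (hτc : Continuous τ)
    (hσb : ∃ M : ℝ, ∀ z, |σ z| ≤ M) (hτb : ∃ M : ℝ, ∀ z, |τ z| ≤ M)
    (x : ℂ) :
    Tendsto (fun y => confDist (fun z => τ z + σ z) x y / confDist τ x y)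
      (𝓝[≠] x) (𝓝 (Real.exp (σ x / 2))) := by
  obtain ⟨M₀, hσM⟩ := hσb
  obtain ⟨M₁, hτM⟩ := hτb
  set M := max M₀ M₁ with hMdef
  have hσ' : ∀ z, |σ z| ≤ M := fun z => (hσM z).trans (le_max_left _ _)
  have hτ' : ∀ z, |τ z| ≤ M := fun z => (hτM z).trans (le_max_right _ _)
  have hM0 : 0 ≤ M := le_trans (abs_nonneg _) (hσ' 0)
  rw [Metric.tendsto_nhdsWithin_nhds]
  intro ε' hε'
  set c := Real.exp (σ x / 2) with hcdef
  have hcont1 : Tendsto (fun u : ℝ => Real.exp ((σ x + 3*u)/2)) (𝓝 0) (𝓝 c) := by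
    have hcontf : Continuous (fun u : ℝ => Real.exp ((σ x + 3*u)/2)) := by continuity
    simpa using hcontf.tendsto 0
  have hcont2 : Tendsto (fun u : ℝ => Real.exp ((σ x - 3*u)/2)) (𝓝 0) (𝓝 c) := by
    have hcontf : Continuous (fun u : ℝ => Real.exp ((σ x - 3*u)/2)) := by continuity
    simpa using hcontf.tendsto 0
  have h1 := hcont1.eventually (gt_mem_nhds (lt_add_of_pos_right c hε'))
  have h2 := hcont2.eventually (lt_mem_nhds (by linarith : c - ε' < c))
  obtain ⟨δ₀, hδ₀, hballε⟩ := Metric.eventually_nhds_iff.mp (h1.and h2)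
  set ε := min (δ₀/2) 1 with hεdef
  have hε : 0 < ε := lt_min (by linarith) one_pos
  have hε1 : ε ≤ 1 := min_le_right _ _
  have hεδ : dist ε 0 < δ₀ := by
    rw [Real.dist_eq, sub_zero, abs_of_pos hε]
    exact lt_of_le_of_lt (min_le_left _ _) (by linarith)
  obtain ⟨hg, hh⟩ := hballε hεδ
  obtain ⟨r₁, hr₁, hσr⟩ := Metric.continuousAt_iff.mp hσc.continuousAt ε hε
  obtain ⟨r₂, hr₂, hτr⟩ := Metric.continuousAt_iff.mp hτc.continuousAt ε hε
  set r := min r₁ r₂ / 2 with hrdef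
  have hr : 0 < r := by positivity
  have hσB : ∀ z ∈ Metric.closedBall x r, |σ z - σ x| ≤ ε := by
    intro z hz
    rw [Metric.mem_closedBall] at hz
    have : dist z x < r₁ := lt_of_le_of_lt hz (by
      have : min r₁ r₂ ≤ r₁ := min_le_left _ _
      simp only [hrdef]; linarith)
    exact le_of_lt (by rw [← Real.dist_eq]; exact hσr this)
  have hτB : ∀ z ∈ Metric.closedBall x r, |τ z - τ x| ≤ ε := by
    intro z hz
    rw [Metric.mem_closedBall] at hz
    have : dist z x < r₂ := lt_of_le_of_lt hz (by
      have : min r₁ r₂ ≤ r₂ := min_le_right _ _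
      simp only [hrdef]; linarith)
    exact le_of_lt (by rw [← Real.dist_eq]; exact hτr this)
  refine ⟨min r (Real.exp (-(2*M)) * r), by positivity, ?_⟩
  intro y hy hyd
  have hyx : y ≠ x := hy
  have hd0 : 0 < dist y x := dist_pos.2 hyx
  set d := dist y x with hddef
  have hdr : d ≤ r := le_of_lt (lt_of_lt_of_le hyd (min_le_left _ _))
  have hdE : d ≤ Real.exp (-(2*M)) * r := le_of_lt (lt_of_lt_of_le hyd (min_le_right _ _))
  have hseg : ∀ t ∈ Set.Icc (0:ℝ) 1, x + t • (y - x) ∈ Metric.closedBall x r := by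
    intro t ht
    rw [Metric.mem_closedBall, dist_eq_norm, add_sub_cancel_left, norm_smul,
      Real.norm_eq_abs, abs_of_nonneg ht.1]
    calc t * ‖y - x‖ ≤ 1 * ‖y - x‖ := by
          exact mul_le_mul_of_nonneg_right ht.2 (norm_nonneg _)
      _ = d := by rw [one_mul, hddef, dist_eq_norm]
      _ ≤ r := hdr
  have hτlow : ∀ z, -M ≤ τ z := fun z => (abs_le.1 (hτ' z)).1
  have hστlow : ∀ z, -(2*M) ≤ τ z + σ z := by
    intro z
    have h1 := (abs_le.1 (hτ' z)).1
    have h2 := (abs_le.1 (hσ' z)).1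
    linarith
  have hτxM := abs_le.1 (hτ' x)
  have hσxM := abs_le.1 (hσ' x)
  set A := confDist (fun z => τ z + σ z) x y with hAdef
  set B := confDist τ x y with hBdef
  have hAu : A ≤ Real.exp ((τ x + σ x + 2*ε)/2) * d := by
    apply confDist_upper _ (hτc.add hσc) x y
    intro t ht
    have h1 := abs_le.1 (hτB _ (hseg t ht))
    have h2 := abs_le.1 (hσB _ (hseg t ht))
    linarith [h1.2, h2.2, show (τ + σ) (x + t • (y - x)) = τ (x + t • (y - x)) + σ (x + t • (y - x)) from rfl]
  have hBu : B ≤ Real.exp ((τ x + ε)/2) * d := by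
    apply confDist_upper _ hτc x y
    intro t ht
    have h1 := abs_le.1 (hτB _ (hseg t ht))
    linarith [h1.2]
  have hAl : Real.exp ((τ x + σ x - 2*ε)/2) * d ≤ A := by
    refine le_trans ?_ (confDist_lower _ (hτc.add hσc) x y (M := 2*M) (r := r) (c := τ x + σ x - 2*ε)
      hστlow (fun z hz => ?_))
    · rw [min_eq_left]
      calc Real.exp ((τ x + σ x - 2*ε)/2) * d
          ≤ Real.exp M * (Real.exp (-(2*M)) * r) := by
            apply mul_le_mul (Real.exp_le_exp.2 (by linarith [hτxM.2, hσxM.2])) hdE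
              (le_of_lt hd0) (Real.exp_nonneg _)
        _ = Real.exp (-(2*M)/2) * r := by
            rw [← mul_assoc, ← Real.exp_add]
            congr 2
            ring
    · have h1 := (abs_le.1 (hτB _ hz)).1
      have h2 := (abs_le.1 (hσB _ hz)).1
      linarith [show (τ + σ) z = τ z + σ z from rfl]
  have hBl : Real.exp ((τ x - ε)/2) * d ≤ B := by
    refine le_trans ?_ (confDist_lower _ hτc x y (M := M) (r := r) (c := τ x - ε)
      hτlow (fun z hz => ?_))
    · rw [min_eq_left]
      calc Real.exp ((τ x - ε)/2) * d
          ≤ Real.exp (M/2) * (Real.exp (-(2*M)) * r) := by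
            apply mul_le_mul (Real.exp_le_exp.2 (by linarith [hτxM.2])) hdE
              (le_of_lt hd0) (Real.exp_nonneg _)
        _ = Real.exp (M/2 + -(2*M)) * r := by
            rw [← mul_assoc, ← Real.exp_add]
        _ ≤ Real.exp (-M/2) * r := by
            apply mul_le_mul_of_nonneg_right (Real.exp_le_exp.2 (by linarith)) (le_of_lt hr)
    · have h1 := (abs_le.1 (hτB _ hz)).1
      linarith
  have hB0 : 0 < B := lt_of_lt_of_le (by positivity) hBl
  have hup : A / B ≤ Real.exp ((σ x + 3*ε)/2) := by
    rw [div_le_iff₀ hB0]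
    calc A ≤ Real.exp ((τ x + σ x + 2*ε)/2) * d := hAu
      _ = Real.exp ((σ x + 3*ε)/2) * (Real.exp ((τ x - ε)/2) * d) := by
          rw [← mul_assoc, ← Real.exp_add]
          congr 2
          ring
      _ ≤ Real.exp ((σ x + 3*ε)/2) * B :=
          mul_le_mul_of_nonneg_left hBl (Real.exp_nonneg _)
  have hlo : Real.exp ((σ x - 3*ε)/2) ≤ A / B := by
    rw [le_div_iff₀ hB0]
    calc Real.exp ((σ x - 3*ε)/2) * B
        ≤ Real.exp ((σ x - 3*ε)/2) * (Real.exp ((τ x + ε)/2) * d) :=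
          mul_le_mul_of_nonneg_left hBu (Real.exp_nonneg _)
      _ = Real.exp ((τ x + σ x - 2*ε)/2) * d := by
          rw [← mul_assoc, ← Real.exp_add]
          congr 2
          ring
      _ ≤ A := hAl
  rw [Real.dist_eq, abs_sub_lt_iff]
  constructor <;> linarith [hg, hh, hup, hlo]
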